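/- Fix μ0, μ1 > 0 and real numbers d0, d1, and define G(ω) := (ω² − μ0·μ1·(ω² − d0)·(ω² − d1))·sin ω + (μ0·(ω² − d0) + μ1·(ω² − d1))·ω·cos ω. There exists n₀ ∈ ℕ such that for every natural number k > n₀, the open interval (kπ, (k+1)π) contains exactly one solution ω of the equation G(ω) = 0. In particular, the equation G(ω) = 0 has infinitely many positive solutions and these solutions are unbounded. -/

import Mathlib

open Real Set Filter

noncomputable def Df (μ0 μ1 d0 d1 : ℝ) (x : ℝ) : ℝ :=
  x^2 - μ0*μ1*(x^2 - d0)*(x^2 - d1)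

noncomputable def Nf (μ0 μ1 d0 d1 : ℝ) (x : ℝ) : ℝ :=
  (μ0*(x^2 - d0) + μ1*(x^2 - d1)) * x

noncomputable def Dd (μ0 μ1 d0 d1 : ℝ) (x : ℝ) : ℝ :=
  2*x - (μ0*μ1*(2*x)*(x^2 - d1) + μ0*μ1*(x^2 - d0)*(2*x))

noncomputable def Nd (μ0 μ1 d0 d1 : ℝ) (x : ℝ) : ℝ :=
  (μ0*(2*x) + μ1*(2*x)) * x + (μ0*(x^2 - d0) + μ1*(x^2 - d1)) * 1

lemma hasDerivAt_Df (μ0 μ1 d0 d1 x : ℝ) :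
    HasDerivAt (Df μ0 μ1 d0 d1) (Dd μ0 μ1 d0 d1 x) x := by
  have h2 : HasDerivAt (fun y : ℝ => y^2) (2*x) x := by
    simpa using hasDerivAt_pow 2 x
  have ha : HasDerivAt (fun y : ℝ => y^2 - d0) (2*x) x := h2.sub_const d0
  have hb : HasDerivAt (fun y : ℝ => y^2 - d1) (2*x) x := h2.sub_const d1
  have hc : HasDerivAt (fun y : ℝ => μ0*μ1*(y^2 - d0)) (μ0*μ1*(2*x)) x :=
    ha.const_mul (μ0*μ1)
  have hd := hc.mul hb
  have := h2.sub hd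
  exact this

lemma hasDerivAt_Nf (μ0 μ1 d0 d1 x : ℝ) :
    HasDerivAt (Nf μ0 μ1 d0 d1) (Nd μ0 μ1 d0 d1 x) x := by
  have h2 : HasDerivAt (fun y : ℝ => y^2) (2*x) x := by
    simpa using hasDerivAt_pow 2 x
  have ha : HasDerivAt (fun y : ℝ => μ0*(y^2 - d0)) (μ0*(2*x)) x :=
    (h2.sub_const d0).const_mul μ0
  have hb : HasDerivAt (fun y : ℝ => μ1*(y^2 - d1)) (μ1*(2*x)) x :=
    (h2.sub_const d1).const_mul μ1
  have hs := (ha.add hb).mul (hasDerivAt_id x)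
  exact hs

lemma cont_Df (μ0 μ1 d0 d1 : ℝ) : Continuous (Df μ0 μ1 d0 d1) := by
  unfold Df; fun_prop

lemma cont_Nf (μ0 μ1 d0 d1 : ℝ) : Continuous (Nf μ0 μ1 d0 d1) := by
  unfold Nf; fun_prop

noncomputable def fAux (μ0 μ1 d0 d1 : ℝ) (u : ℝ) : ℝ :=
  (2*u^2 - (μ0*μ1*2*(1-d1*u^2) + μ0*μ1*(1-d0*u^2)*2)) * (μ0*(1-d0*u^2)+μ1*(1-d1*u^2))
  - (u^2 - μ0*μ1*(1-d0*u^2)*(1-d1*u^2)) * (μ0*2+μ1*2 + (μ0*(1-d0*u^2)+μ1*(1-d1*u^2)))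

noncomputable def gAux (μ0 μ1 d0 d1 : ℝ) (u : ℝ) : ℝ := μ0*(1-d0*u^2)+μ1*(1-d1*u^2)

lemma fAux_zero (μ0 μ1 d0 d1 : ℝ) :
    fAux μ0 μ1 d0 d1 0 = -(μ0*μ1*(μ0+μ1)) := by simp [fAux]; ring

lemma gAux_zero (μ0 μ1 d0 d1 : ℝ) : gAux μ0 μ1 d0 d1 0 = μ0+μ1 := by simp [gAux]

lemma cont_fAux (μ0 μ1 d0 d1 : ℝ) : Continuous (fAux μ0 μ1 d0 d1) := by
  unfold fAux; fun_prop

lemma cont_gAux (μ0 μ1 d0 d1 : ℝ) : Continuous (gAux μ0 μ1 d0 d1) := by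
  unfold gAux; fun_prop

lemma eventually_key (μ0 μ1 d0 d1 : ℝ) (hμ0 : 0 < μ0) (hμ1 : 0 < μ1) :
    ∀ᶠ x : ℝ in atTop, 0 < Nf μ0 μ1 d0 d1 x ∧
      (Dd μ0 μ1 d0 d1 x * Nf μ0 μ1 d0 d1 x - Df μ0 μ1 d0 d1 x * Nd μ0 μ1 d0 d1 x)
        / (Nf μ0 μ1 d0 d1 x)^2 < 1 := by
  have hB : 0 < μ0 + μ1 := by linarith
  have hinv : Tendsto (fun x : ℝ => x⁻¹) atTop (nhds 0) := tendsto_inv_atTop_zero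
  -- N/x³ tends to μ0+μ1
  have hgt : Tendsto (fun x : ℝ => gAux μ0 μ1 d0 d1 x⁻¹) atTop (nhds (μ0+μ1)) := by
    have := ((cont_gAux μ0 μ1 d0 d1).tendsto 0).comp hinv
    simpa [gAux_zero, Function.comp_def] using this
  have hN3 : Tendsto (fun x : ℝ => Nf μ0 μ1 d0 d1 x / x^3) atTop (nhds (μ0+μ1)) := by
    refine (tendsto_congr' ?_).mpr hgt
    filter_upwards [eventually_ge_atTop (1:ℝ)] with x hx
    have hx0 : x ≠ 0 := by positivity
    unfold Nf gAux
    field_simp [Nf, gAux]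
  -- numerator/x⁶ tends to -(μ0μ1(μ0+μ1))
  have hft : Tendsto (fun x : ℝ => fAux μ0 μ1 d0 d1 x⁻¹) atTop
      (nhds (-(μ0*μ1*(μ0+μ1)))) := by
    have := ((cont_fAux μ0 μ1 d0 d1).tendsto 0).comp hinv
    simpa [fAux_zero, Function.comp_def] using this
  have hnum : Tendsto (fun x : ℝ =>
      (Dd μ0 μ1 d0 d1 x * Nf μ0 μ1 d0 d1 x - Df μ0 μ1 d0 d1 x * Nd μ0 μ1 d0 d1 x) / x^6)
      atTop (nhds (-(μ0*μ1*(μ0+μ1)))) := by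
    refine (tendsto_congr' ?_).mpr hft
    filter_upwards [eventually_ge_atTop (1:ℝ)] with x hx
    have hx0 : x ≠ 0 := by positivity
    unfold Nf Df Dd Nd fAux
    field_simp [Nf, Df, Dd, Nd, fAux]
  -- N eventually positive
  have hNpos : ∀ᶠ x : ℝ in atTop, 0 < Nf μ0 μ1 d0 d1 x := by
    filter_upwards [hN3.eventually_const_lt hB, eventually_gt_atTop (0:ℝ)] with x h1 h2
    rcases div_pos_iff.mp h1 with ⟨h, _⟩ | ⟨_, h⟩
    · exact h
    · have : (0:ℝ) < x^3 := by positivity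
      linarith
  -- quotient limit
  have hq : Tendsto (fun x : ℝ =>
      (Dd μ0 μ1 d0 d1 x * Nf μ0 μ1 d0 d1 x - Df μ0 μ1 d0 d1 x * Nd μ0 μ1 d0 d1 x)
        / (Nf μ0 μ1 d0 d1 x)^2) atTop (nhds (-(μ0*μ1*(μ0+μ1)) / (μ0+μ1)^2)) := by
    have hden : Tendsto (fun x : ℝ => (Nf μ0 μ1 d0 d1 x / x^3)^2) atTop
        (nhds ((μ0+μ1)^2)) := hN3.pow 2
    have h := hnum.div hden (by positivity)
    refine (tendsto_congr' ?_).mpr h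
    filter_upwards [eventually_gt_atTop (0:ℝ), hNpos] with x hx hN
    have hx0 : x ≠ 0 := ne_of_gt hx
    have hN0 : Nf μ0 μ1 d0 d1 x ≠ 0 := ne_of_gt hN
    simp only [Pi.div_apply]
    field_simp
  have hlt : ∀ᶠ x : ℝ in atTop,
      (Dd μ0 μ1 d0 d1 x * Nf μ0 μ1 d0 d1 x - Df μ0 μ1 d0 d1 x * Nd μ0 μ1 d0 d1 x)
        / (Nf μ0 μ1 d0 d1 x)^2 < 1 := by
    refine hq.eventually_lt_const ?_
    have h1 : 0 < (μ0+μ1)^2 := by positivity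
    have h2 : -(μ0*μ1*(μ0+μ1)) / (μ0+μ1)^2 < 0 :=
      div_neg_of_neg_of_pos (by nlinarith [mul_pos (mul_pos hμ0 hμ1) hB]) h1
    linarith
  exact hNpos.and hlt

/-- There is n₀ such that for every k > n₀ the interval (kπ,(k+1)π)
contains exactly one zero of G; moreover the set of positive zeros of G is
infinite and unbounded above. -/
theorem characteristic_equation_infinitely_many_zeros
    (μ0 μ1 d0 d1 : ℝ) (hμ0 : 0 < μ0) (hμ1 : 0 < μ1)
    (G : ℝ → ℝ)
    (hG : ∀ ω, G ω = (ω^2 - μ0*μ1*(ω^2 - d0)*(ω^2 - d1)) * Real.sin ω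
        + (μ0*(ω^2 - d0) + μ1*(ω^2 - d1)) * ω * Real.cos ω) :
    (∃ n₀ : ℕ, ∀ k : ℕ, n₀ < k →
      ∃! ω : ℝ, ω ∈ Ioo ((k:ℝ)*π) (((k:ℝ)+1)*π) ∧ G ω = 0) ∧
    {ω : ℝ | 0 < ω ∧ G ω = 0}.Infinite ∧
    ¬ BddAbove {ω : ℝ | 0 < ω ∧ G ω = 0} := by
  have hπ1 : (1:ℝ) ≤ π := by linarith [Real.pi_gt_three]
  -- continuity of G
  have hGeq : G = fun ω => Df μ0 μ1 d0 d1 ω * Real.sin ω + Nf μ0 μ1 d0 d1 ω * Real.cos ω := by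
    funext ω; rw [hG]; simp only [Df, Nf]; try ring
  have hGcont : Continuous G := by
    rw [hGeq]
    exact ((cont_Df μ0 μ1 d0 d1).mul Real.continuous_sin).add
      ((cont_Nf μ0 μ1 d0 d1).mul Real.continuous_cos)
  -- cos (kπ)
  have hcos : ∀ n : ℕ, Real.cos ((n:ℝ)*π) = (-1)^n := fun n => by
    simpa using Real.cos_nat_mul_pi_sub 0 n
  -- threshold
  obtain ⟨M, hM⟩ := (eventually_key μ0 μ1 d0 d1 hμ0 hμ1).exists_forall_of_atTop
  set n₀ : ℕ := ⌈M⌉₊ with hn₀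
  have hkey : ∀ k : ℕ, n₀ < k →
      ∃! ω : ℝ, ω ∈ Ioo ((k:ℝ)*π) (((k:ℝ)+1)*π) ∧ G ω = 0 := by
    intro k hk
    set a : ℝ := (k:ℝ)*π with ha
    set b : ℝ := ((k:ℝ)+1)*π with hb
    have hab : a ≤ b := by
      rw [ha, hb]
      have : (0:ℝ) < π := Real.pi_pos
      nlinarith [Nat.cast_nonneg (α := ℝ) k]
    have hMa : M ≤ a := by
      have h1 : M ≤ (⌈M⌉₊:ℝ) := Nat.le_ceil M
      have h2 : ((n₀:ℝ)) + 1 ≤ (k:ℝ) := by exact_mod_cast hk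
      have h3 : (k:ℝ) ≤ (k:ℝ)*π := le_mul_of_one_le_right (Nat.cast_nonneg k) hπ1
      rw [ha]; rw [hn₀] at h2; linarith
    have hIcc : ∀ x ∈ Icc a b, 0 < Nf μ0 μ1 d0 d1 x ∧
        (Dd μ0 μ1 d0 d1 x * Nf μ0 μ1 d0 d1 x - Df μ0 μ1 d0 d1 x * Nd μ0 μ1 d0 d1 x)
          / (Nf μ0 μ1 d0 d1 x)^2 < 1 := fun x hx => hM x (le_trans hMa hx.1)
    -- sin nonzero on the open interval
    have hsin_ne : ∀ x ∈ Ioo a b, Real.sin x ≠ 0 := by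
      intro x hx hzero
      rw [Real.sin_eq_zero_iff] at hzero
      obtain ⟨n, hn⟩ := hzero
      have h1 : (k:ℝ) * π < (n:ℝ) * π := by rw [hn]; exact hx.1
      have h2 : (n:ℝ) * π < ((k:ℝ)+1) * π := by rw [hn]; exact hx.2
      have hπ : (0:ℝ) < π := Real.pi_pos
      have h1' : (k:ℝ) < (n:ℝ) := lt_of_mul_lt_mul_right (by linarith) hπ.le
      have h2' : (n:ℝ) < (k:ℝ)+1 := lt_of_mul_lt_mul_right (by linarith) hπ.le
      have h1'' : (k:ℤ) < n := by exact_mod_cast h1'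
      have h2'' : n < (k:ℤ)+1 := by exact_mod_cast h2'
      omega
    -- uniqueness via strict antitonicity of ψ = cot + D/N
    have huniq : ∀ y ∈ Ioo a b, ∀ z ∈ Ioo a b, G y = 0 → G z = 0 → y = z := by
      intro y hy z hz hGy hGz
      set ψ : ℝ → ℝ := fun x =>
        Real.cos x / Real.sin x + Df μ0 μ1 d0 d1 x / Nf μ0 μ1 d0 d1 x with hψ
      have hanti : StrictAntiOn ψ (Ioo a b) := by
        apply strictAntiOn_of_deriv_neg (convex_Ioo a b)
        · apply ContinuousOn.add
          · exact ContinuousOn.div Real.continuous_cos.continuousOn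
              Real.continuous_sin.continuousOn hsin_ne
          · exact ContinuousOn.div (cont_Df μ0 μ1 d0 d1).continuousOn
              (cont_Nf μ0 μ1 d0 d1).continuousOn
              (fun x hx => (hIcc x (Ioo_subset_Icc_self hx)).1.ne')
        · intro x hx
          rw [interior_Ioo] at hx
          have hs := hsin_ne x hx
          have hNx := (hIcc x (Ioo_subset_Icc_self hx)).1
          have hqx := (hIcc x (Ioo_subset_Icc_self hx)).2
          have h1 : HasDerivAt (fun y => Real.cos y / Real.sin y)
              ((-Real.sin x * Real.sin x - Real.cos x * Real.cos x) / Real.sin x ^ 2) x :=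
            (Real.hasDerivAt_cos x).div (Real.hasDerivAt_sin x) hs
          have h2 : HasDerivAt (fun y => Df μ0 μ1 d0 d1 y / Nf μ0 μ1 d0 d1 y)
              ((Dd μ0 μ1 d0 d1 x * Nf μ0 μ1 d0 d1 x - Df μ0 μ1 d0 d1 x * Nd μ0 μ1 d0 d1 x)
                / (Nf μ0 μ1 d0 d1 x)^2) x :=
            (hasDerivAt_Df μ0 μ1 d0 d1 x).div (hasDerivAt_Nf μ0 μ1 d0 d1 x) hNx.ne'
          have h3 := h1.add h2
          rw [show deriv ψ x = _ from h3.deriv]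
          have hs2 : 0 < Real.sin x ^ 2 :=
            lt_of_le_of_ne (sq_nonneg _) (Ne.symm (pow_ne_zero 2 hs))
          have hsle : Real.sin x ^ 2 ≤ 1 := Real.sin_sq_le_one x
          have h4 : -Real.sin x * Real.sin x - Real.cos x * Real.cos x = -1 := by
            linear_combination -Real.sin_sq_add_cos_sq x
          rw [h4]
          have h5 : (1:ℝ) ≤ 1 / Real.sin x ^ 2 := (le_div_iff₀ hs2).mpr (by linarith)
          have h6 : (-1:ℝ) / Real.sin x ^ 2 = -(1 / Real.sin x ^ 2) := by ring
          rw [h6]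
          linarith
      have hzero : ∀ w ∈ Ioo a b, G w = 0 → ψ w = 0 := by
        intro w hw h0
        have hs := hsin_ne w hw
        have hN := (hIcc w (Ioo_subset_Icc_self hw)).1.ne'
        have key : ψ w = G w / (Nf μ0 μ1 d0 d1 w * Real.sin w) := by
          rw [hψ, hGeq]
          field_simp
          ring
        rw [key, h0, zero_div]
      exact hanti.injOn hy hz (by rw [hzero y hy hGy, hzero z hz hGz])
    -- existence by IVT
    have hNa : 0 < Nf μ0 μ1 d0 d1 a := (hIcc a ⟨le_refl a, hab⟩).1
    have hNb : 0 < Nf μ0 μ1 d0 d1 b := (hIcc b ⟨hab, le_refl b⟩).1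
    have hGa : G a = Nf μ0 μ1 d0 d1 a * (-1)^k := by
      rw [ha, hG, Real.sin_nat_mul_pi, hcos k]
      simp only [Nf]; ring
    have hGb : G b = Nf μ0 μ1 d0 d1 b * (-1)^(k+1) := by
      have hcast : ((k:ℝ)+1) = (((k+1:ℕ)):ℝ) := by push_cast; ring
      rw [hb, hG, hcast, Real.sin_nat_mul_pi, hcos (k+1)]
      simp only [Nf]; ring
    obtain ⟨ω, hωI, hωG⟩ : ∃ ω ∈ Ioo a b, G ω = 0 := by
      rcases Nat.even_or_odd k with he | ho
      · have e1 : G a = Nf μ0 μ1 d0 d1 a := by rw [hGa, he.neg_one_pow]; ring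
        have e2 : G b = -Nf μ0 μ1 d0 d1 b := by rw [hGb, (he.add_one).neg_one_pow]; ring
        have h0 : (0:ℝ) ∈ Ioo (G b) (G a) := by
          rw [e1, e2]; constructor <;> linarith
        obtain ⟨ω, hωI, hωG⟩ := intermediate_value_Ioo' hab hGcont.continuousOn h0
        exact ⟨ω, hωI, hωG⟩
      · have e1 : G a = -Nf μ0 μ1 d0 d1 a := by rw [hGa, ho.neg_one_pow]; ring
        have e2 : G b = Nf μ0 μ1 d0 d1 b := by
          rw [hGb, (Even.neg_one_pow (by simpa using ho.add_one))]; ring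
        have h0 : (0:ℝ) ∈ Ioo (G a) (G b) := by
          rw [e1, e2]; constructor <;> linarith
        obtain ⟨ω, hωI, hωG⟩ := intermediate_value_Ioo hab hGcont.continuousOn h0
        exact ⟨ω, hωI, hωG⟩
    exact ⟨ω, ⟨hωI, hωG⟩, fun y hy => huniq y hy.1 ω hωI hy.2 hωG⟩
  -- unboundedness
  have hub : ¬ BddAbove {ω : ℝ | 0 < ω ∧ G ω = 0} := by
    rintro ⟨c, hc⟩
    set k : ℕ := n₀ + 1 + ⌈max c 0⌉₊ with hkdef
    have hk : n₀ < k := by omega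
    obtain ⟨ω, ⟨hωI, hωG⟩, -⟩ := hkey k hk
    have hπ : (0:ℝ) < π := Real.pi_pos
    have hk1 : (1:ℝ) ≤ (k:ℝ) := by exact_mod_cast Nat.one_le_iff_ne_zero.mpr (by omega)
    have hωpos : 0 < ω := lt_of_le_of_lt (by positivity) hωI.1
    have hle : ω ≤ c := hc ⟨hωpos, hωG⟩
    have h1 : (⌈max c 0⌉₊ : ℝ) ≤ (k:ℝ) := by
      have : (⌈max c 0⌉₊ : ℕ) ≤ k := by omega
      exact_mod_cast this
    have h2 : c ≤ (⌈max c 0⌉₊ : ℝ) := le_trans (le_max_left c 0) (Nat.le_ceil _)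
    have h3 : (k:ℝ) ≤ (k:ℝ)*π := le_mul_of_one_le_right (Nat.cast_nonneg k) hπ1
    have : c < ω := by
      calc c ≤ (k:ℝ) := le_trans h2 h1
      _ ≤ (k:ℝ)*π := h3
      _ < ω := hωI.1
    linarith
  refine ⟨⟨n₀, hkey⟩, ?_, hub⟩
  intro hfin
  exact hub hfin.bddAbove
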